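/- Let S be a positive integer, d̄ = 2^S, and let φ̄ ∈ ℝ^{d̄×d̄} be an arbitrary matrix with rows φ̄_1,…,φ̄_{d̄}. For every fixed scale s ∈ {1,…,S}, the number of locations l ∈ {1,…,2^{S−s}} for which there exists some j ∈ {1,…,d̄} with ⟨φ̄, h^{(s,l)} ⊗ e^{(j)}⟩ ≠ 0 is at most Σ_{i=1}^{d̄−1} 1[φ̄_i ≠ φ̄_{i+1}], the number of indices i at which consecutive rows of φ̄ differ. -/

import Mathlib

open scoped Classical

noncomputable section

/-- The Haar vector `h^(s,l)` in `ℝ^(2^S)` (1-based math indices mapped to 0-based `Fin`). -/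
def haarVec (S s l : ℕ) : Fin (2 ^ S) → ℝ := fun i =>
  if 2 ^ s * (l - 1) ≤ (i : ℕ) ∧ (i : ℕ) < 2 ^ s * (l - 1) + 2 ^ (s - 1) then 1
  else if 2 ^ s * (l - 1) + 2 ^ (s - 1) ≤ (i : ℕ) ∧ (i : ℕ) < 2 ^ s * l then -1
  else 0

/-- The Haar collection ℋ: the all-ones vector together with all `h^(s,l)`,
`s ∈ [1,S]`, `l ∈ [1, 2^(S-s)]`. -/
def haarSet (S : ℕ) : Set (Fin (2 ^ S) → ℝ) :=
  {fun _ => (1 : ℝ)} ∪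
    {v | ∃ s l : ℕ, 1 ≤ s ∧ s ≤ S ∧ 1 ≤ l ∧ l ≤ 2 ^ (S - s) ∧ v = haarVec S s l}

/-- Outer product of two vectors, as a matrix. -/
def outer {n : ℕ} (x y : Fin n → ℝ) : Matrix (Fin n) (Fin n) ℝ :=
  Matrix.of fun i j => x i * y j

/-- Frobenius inner product of two square matrices. -/
def frob {n : ℕ} (A B : Matrix (Fin n) (Fin n) ℝ) : ℝ := ∑ i, ∑ j, A i j * B i j

/-- The `j`-th canonical basis vector `e^(j)`. -/
def eVec {n : ℕ} (j : Fin n) : Fin n → ℝ := fun k => if k = j then 1 else 0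

/-- Right stochastic matrix: nonnegative entries, each row sums to 1. -/
def IsStochastic {n : ℕ} (M : Matrix (Fin n) (Fin n) ℝ) : Prop :=
  (∀ i j, 0 ≤ M i j) ∧ ∀ i, ∑ j, M i j = 1

/-- Membership in the probability simplex Δ(n). -/
def InSimplex {n : ℕ} (p : Fin n → ℝ) : Prop := (∀ i, 0 ≤ p i) ∧ ∑ i, p i = 1

/-- Action of a (stochastic) matrix on a distribution: `(φ(p))_j = Σ_i p_i φ_{i,j}`. -/
def act {n : ℕ} (M : Matrix (Fin n) (Fin n) ℝ) (p : Fin n → ℝ) : Fin n → ℝ :=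
  fun j => ∑ i, p i * M i j

/-- `Σ_{i=1}^{n-1} 1[M_i ≠ M_{i+1}]`: the number of consecutive-row changes of `M`. -/
def rowSwitch {n : ℕ} (M : Matrix (Fin n) (Fin n) ℝ) : ℕ :=
  (Finset.univ.filter fun i : Fin n =>
    ∃ h : (i : ℕ) + 1 < n, M i ≠ M ⟨(i : ℕ) + 1, h⟩).card

/-- Uniformity `d^unif_φ`: the frequency of the most frequent row of `φ`. -/
def dUnif {n : ℕ} (M : Matrix (Fin n) (Fin n) ℝ) : ℕ :=
  Finset.univ.sup fun i : Fin n => (Finset.univ.filter fun k : Fin n => M k = M i).card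

/-- Degree of self-map `d^self_φ`: the number of rows `i` with `φ_i = e^(i)`. -/
def dSelf {n : ℕ} (M : Matrix (Fin n) (Fin n) ℝ) : ℕ :=
  (Finset.univ.filter fun i : Fin n => M i = eVec i).card

lemma sum_ind (N a m : ℕ) (h : a + 2 * m ≤ N) :
    ∑ i ∈ Finset.range N,
      (if a ≤ i ∧ i < a + m then (1 : ℝ) else if a + m ≤ i ∧ i < a + 2 * m then -1 else 0)
      = 0 := by
  have key : ∀ i ∈ Finset.range N,
      (if a ≤ i ∧ i < a + m then (1 : ℝ) else if a + m ≤ i ∧ i < a + 2 * m then -1 else 0) =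
      (if i ∈ Finset.Ico a (a + m) then (1 : ℝ) else 0) +
      (if i ∈ Finset.Ico (a + m) (a + 2 * m) then (-1 : ℝ) else 0) := by
    intro i _
    simp only [Finset.mem_Ico]
    split_ifs <;> first | ring1 | (exfalso; omega)
  rw [Finset.sum_congr rfl key, Finset.sum_add_distrib, Finset.sum_ite_mem, Finset.sum_ite_mem]
  have hsub1 : Finset.range N ∩ Finset.Ico a (a + m) = Finset.Ico a (a + m) := by
    apply Finset.inter_eq_right.mpr
    intro x hx; simp only [Finset.mem_Ico] at hx; simp only [Finset.mem_range]; omega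
  have hsub2 : Finset.range N ∩ Finset.Ico (a + m) (a + 2 * m) =
      Finset.Ico (a + m) (a + 2 * m) := by
    apply Finset.inter_eq_right.mpr
    intro x hx; simp only [Finset.mem_Ico] at hx; simp only [Finset.mem_range]; omega
  rw [hsub1, hsub2]
  simp only [Finset.sum_const, Nat.card_Ico, nsmul_eq_mul, mul_one, mul_neg_one]
  have h1 : a + m - a = m := by omega
  have h2 : a + 2 * m - (a + m) = m := by omega
  rw [h1, h2]; ring

lemma sum_haar (S s l : ℕ) (hs1 : 1 ≤ s) (hl1 : 1 ≤ l) (hB : 2 ^ s * l ≤ 2 ^ S) :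
    ∑ i : Fin (2 ^ S), haarVec S s l i = 0 := by
  have h2m : 2 ^ s = 2 * 2 ^ (s - 1) := by
    rw [← pow_succ']; congr 1; omega
  have hend : 2 ^ s * l = 2 ^ s * (l - 1) + 2 * 2 ^ (s - 1) := by
    rw [← h2m]
    have hl : l - 1 + 1 = l := by omega
    calc 2 ^ s * l = 2 ^ s * (l - 1 + 1) := by rw [hl]
      _ = 2 ^ s * (l - 1) + 2 ^ s := by ring
  have h1 : ∑ i : Fin (2 ^ S), haarVec S s l i =
      ∑ i ∈ Finset.range (2 ^ S),
        (if 2 ^ s * (l - 1) ≤ i ∧ i < 2 ^ s * (l - 1) + 2 ^ (s - 1) then (1 : ℝ)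
         else if 2 ^ s * (l - 1) + 2 ^ (s - 1) ≤ i ∧ i < 2 ^ s * l then -1 else 0) :=
    Fin.sum_univ_eq_sum_range
      (fun i => if 2 ^ s * (l - 1) ≤ i ∧ i < 2 ^ s * (l - 1) + 2 ^ (s - 1) then (1 : ℝ)
        else if 2 ^ s * (l - 1) + 2 ^ (s - 1) ≤ i ∧ i < 2 ^ s * l then -1 else 0) (2 ^ S)
  rw [h1]
  simp_rw [hend]
  exact sum_ind (2 ^ S) (2 ^ s * (l - 1)) (2 ^ (s - 1)) (by omega)

lemma block_switch {S : ℕ} (φ : Matrix (Fin (2 ^ S)) (Fin (2 ^ S)) ℝ) {s l : ℕ}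
    (hs1 : 1 ≤ s) (hs2 : s ≤ S) (hl1 : 1 ≤ l) (hl2 : l ≤ 2 ^ (S - s))
    (j : Fin (2 ^ S)) (hj : frob φ (outer (haarVec S s l) (eVec j)) ≠ 0) :
    ∃ i : ℕ, ∃ hi : i + 1 < 2 ^ S,
      2 ^ s * (l - 1) ≤ i ∧ i + 1 < 2 ^ s * l ∧
      φ ⟨i, Nat.lt_of_succ_lt hi⟩ ≠ φ ⟨i + 1, hi⟩ := by
  set A := 2 ^ s * (l - 1) with hA
  have hB : 2 ^ s * l ≤ 2 ^ S := by
    calc 2 ^ s * l ≤ 2 ^ s * 2 ^ (S - s) := Nat.mul_le_mul_left _ hl2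
      _ = 2 ^ (s + (S - s)) := (pow_add 2 s (S - s)).symm
      _ = 2 ^ S := by congr 1; omega
  have hend : 2 ^ s * l = A + 2 ^ s := by
    rw [hA]
    have hl : l - 1 + 1 = l := by omega
    calc 2 ^ s * l = 2 ^ s * (l - 1 + 1) := by rw [hl]
      _ = 2 ^ s * (l - 1) + 2 ^ s := by ring
  have hspos : 0 < 2 ^ s := Nat.pow_pos (by norm_num)
  have hApos : A < 2 ^ S := by omega
  clear_value A
  by_contra hcon
  push_neg at hcon
  have hall : ∀ k : ℕ, k < 2 ^ s → ∀ hk : A + k < 2 ^ S,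
      φ ⟨A + k, hk⟩ = φ ⟨A, hApos⟩ := by
    intro k
    induction k with
    | zero => intro _ hk; rfl
    | succ n ih =>
      intro hn hk
      have hn' : n < 2 ^ s := by omega
      have hk' : A + n < 2 ^ S := by omega
      have hstep := hcon (A + n) (by omega) (by omega) (by omega)
      calc φ ⟨A + (n + 1), hk⟩ = φ ⟨A + n + 1, by omega⟩ := by congr 1
        _ = φ ⟨A + n, hk'⟩ := hstep.symm
        _ = φ ⟨A, hApos⟩ := ih hn' hk'
  apply hj
  have hf : frob φ (outer (haarVec S s l) (eVec j)) =
      ∑ i : Fin (2 ^ S), φ i j * haarVec S s l i := by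
    unfold frob outer eVec
    refine Finset.sum_congr rfl fun i _ => ?_
    simp [Matrix.of_apply, mul_ite, Finset.sum_ite_eq']
  rw [hf]
  have hrow : ∀ i : Fin (2 ^ S), φ i j * haarVec S s l i =
      φ ⟨A, hApos⟩ j * haarVec S s l i := by
    rintro ⟨iv, hiv⟩
    by_cases hz : haarVec S s l ⟨iv, hiv⟩ = 0
    · rw [hz]; ring
    · have hbound : A ≤ iv ∧ iv < 2 ^ s * l := by
        unfold haarVec at hz
        rw [← hA] at hz
        have hk0 : 0 < 2 ^ (s - 1) := Nat.pow_pos (by norm_num)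
        have hmlt : 2 ^ (s - 1) < 2 ^ s := by
          apply Nat.pow_lt_pow_right (by norm_num); omega
        simp only [Fin.val_mk] at hz
        split_ifs at hz with h1 h2
        · exact ⟨h1.1, by omega⟩
        · exact ⟨by omega, h2.2⟩
        · exact absurd rfl hz
      have hrw : φ ⟨iv, hiv⟩ = φ ⟨A, hApos⟩ := by
        have h3 := hall (iv - A) (by omega) (by omega)
        have hi2 : (⟨iv, hiv⟩ : Fin (2 ^ S)) = ⟨A + (iv - A), by omega⟩ := by
          simp only [Fin.mk.injEq]; omega
        rw [hi2]; exact h3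
      rw [hrw]
  rw [Finset.sum_congr rfl fun i _ => hrow i, ← Finset.mul_sum,
    sum_haar S s l hs1 hl1 hB, mul_zero]

/-- for a fixed scale `s`, the number of locations `l ∈ [1, 2^(S-s)]`
with `⟨φ̄, h^(s,l) ⊗ e^(j)⟩ ≠ 0` for some `j` is at most the number of consecutive-row
changes `Σ_{i=1}^{2^S-1} 1[φ̄_i ≠ φ̄_{i+1}]`. -/

theorem card_active_locations_le_rowSwitch (S : ℕ) (hS : 1 ≤ S)
    (φ : Matrix (Fin (2 ^ S)) (Fin (2 ^ S)) ℝ)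
    (s : ℕ) (hs1 : 1 ≤ s) (hs2 : s ≤ S) :
    ((Finset.Icc 1 (2 ^ (S - s))).filter fun l =>
        ∃ j : Fin (2 ^ S), frob φ (outer (haarVec S s l) (eVec j)) ≠ 0).card ≤
      rowSwitch φ := by
  classical
  have hNpos : 0 < 2 ^ S := Nat.pow_pos (by norm_num)
  rw [rowSwitch]
  set P : ℕ → Prop := fun l => ∃ i : ℕ, ∃ hi : i + 1 < 2 ^ S,
      2 ^ s * (l - 1) ≤ i ∧ i + 1 < 2 ^ s * l ∧
      φ ⟨i, Nat.lt_of_succ_lt hi⟩ ≠ φ ⟨i + 1, hi⟩ with hP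
  have hPl : ∀ l ∈ (Finset.Icc 1 (2 ^ (S - s))).filter fun l =>
      ∃ j : Fin (2 ^ S), frob φ (outer (haarVec S s l) (eVec j)) ≠ 0, P l := by
    intro l hl
    rw [Finset.mem_filter, Finset.mem_Icc] at hl
    obtain ⟨⟨hl1, hl2⟩, j, hj⟩ := hl
    exact block_switch φ hs1 hs2 hl1 hl2 j hj
  apply Finset.card_le_card_of_injOn
    (fun l => if h : P l then
        (⟨h.choose, Nat.lt_of_succ_lt h.choose_spec.choose⟩ : Fin (2 ^ S))
      else (⟨0, hNpos⟩ : Fin (2 ^ S)))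
  · intro l hl
    have hp := hPl l hl
    simp only [dif_pos hp]
    rw [Finset.mem_coe, Finset.mem_filter]
    refine ⟨Finset.mem_univ _, ?_⟩
    obtain ⟨hi, ha, hb, hc⟩ := hp.choose_spec
    exact ⟨hi, hc⟩
  · intro l1 h1 l2 h2 heq
    have hp1 := hPl l1 h1
    have hp2 := hPl l2 h2
    simp only [dif_pos hp1, dif_pos hp2, Fin.mk.injEq] at heq
    obtain ⟨hi1, ha1, hb1, _⟩ := hp1.choose_spec
    obtain ⟨hi2, ha2, hb2, _⟩ := hp2.choose_spec
    rw [Finset.mem_coe, Finset.mem_filter, Finset.mem_Icc] at h1 h2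
    rw [heq] at ha1 hb1
    set i := hp2.choose with hidef
    rcases lt_trichotomy l1 l2 with hlt | he | hgt
    · exfalso
      have : 2 ^ s * l1 ≤ 2 ^ s * (l2 - 1) := Nat.mul_le_mul_left _ (by omega)
      omega
    · exact he
    · exfalso
      have : 2 ^ s * l2 ≤ 2 ^ s * (l1 - 1) := Nat.mul_le_mul_left _ (by omega)
      omega
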